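/- Let n ≥ 1, u ∈ L²(ℝⁿ) ∩ 𝒮(ℝⁿ) (Schwartz) satisfy the Fourier-side equation (2 ln|ξ|)û(ξ) = 𝓕(g)(ξ) where g = (4/n) u ln u - T u for some T ∈ ℝ, and define u_l(x) = l^{-n/2}u(x/l) for l > 0. Then u_l satisfies (2 ln|ξ|)û_l(ξ) = 𝓕((4/n) u_l ln u_l - T u_l)(ξ). That is, the equation 𝓛_Δ u + T u = (4/n) u ln u is invariant under the mass-preserving scaling u ↦ u_l. -/

import Mathlib

open MeasureTheory SchwartzMap Module
open scoped FourierTransform RealInnerProductSpace Topology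

theorem mul_log_le_sqrt {M t : ℝ} (hM : 1 ≤ M) (ht : |t| ≤ M) :
    |t * Real.log t| ≤ (2 + Real.sqrt M * Real.log M) * Real.sqrt |t| := by
  have hM0 : (0:ℝ) < M := lt_of_lt_of_le one_pos hM
  have hlogM : 0 ≤ Real.log M := Real.log_nonneg hM
  set s := |t| with hs
  have habs : |t * Real.log t| = s * |Real.log s| := by
    rw [abs_mul, hs, Real.log_abs]
  rw [habs]
  have hs0 : 0 ≤ s := abs_nonneg t
  rcases eq_or_lt_of_le hs0 with h0 | h0
  · rw [← h0]; simp
  rcases le_or_gt s 1 with h1 | h1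
  · -- small case
    have hlogneg : Real.log s ≤ 0 := Real.log_nonpos hs0 h1
    have hsq : 0 < Real.sqrt s := Real.sqrt_pos.2 h0
    have key : -Real.log s ≤ 2 * (Real.sqrt s)⁻¹ := by
      have h2 : Real.log s = 2 * Real.log (Real.sqrt s) := by
        rw [Real.log_sqrt hs0]; ring
      have h4 : Real.log (Real.sqrt s)⁻¹ ≤ (Real.sqrt s)⁻¹ - 1 :=
        Real.log_le_sub_one_of_pos (by positivity)
      rw [Real.log_inv] at h4
      nlinarith [h4]
    have heq2 : s * |Real.log s| = s * (-Real.log s) := by rw [abs_of_nonpos hlogneg]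
    rw [heq2]
    have hss : s * (Real.sqrt s)⁻¹ = Real.sqrt s := by
      rw [← Real.sqrt_mul_self hs0]; field_simp
      rw [Real.sq_sqrt (Real.sqrt_nonneg _)]
    calc s * (-Real.log s) ≤ s * (2 * (Real.sqrt s)⁻¹) := by
          apply mul_le_mul_of_nonneg_left key hs0
      _ = 2 * Real.sqrt s := by rw [mul_left_comm, hss]
      _ ≤ (2 + Real.sqrt M * Real.log M) * Real.sqrt s := by
          apply mul_le_mul_of_nonneg_right _ (Real.sqrt_nonneg s)
          nlinarith [Real.sqrt_nonneg M]
  · -- large case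
    have hlogpos : 0 ≤ Real.log s := Real.log_nonneg h1.le
    rw [abs_of_nonneg hlogpos]
    have hsM : Real.sqrt s ≤ Real.sqrt M := Real.sqrt_le_sqrt ht
    have hsplit : s = Real.sqrt s * Real.sqrt s := (Real.mul_self_sqrt hs0).symm
    calc s * Real.log s = (Real.sqrt s * Real.sqrt s) * Real.log s := by rw [← hsplit]
      _ ≤ (Real.sqrt M * Real.sqrt s) * Real.log M := by
          apply mul_le_mul
          · exact mul_le_mul_of_nonneg_right hsM (Real.sqrt_nonneg s)
          · exact Real.log_le_log h0 ht
          · exact hlogpos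
          · positivity
      _ = (Real.sqrt M * Real.log M) * Real.sqrt s := by ring
      _ ≤ (2 + Real.sqrt M * Real.log M) * Real.sqrt s := by
          apply mul_le_mul_of_nonneg_right _ (Real.sqrt_nonneg s)
          linarith

theorem integrable_mul_log {n : ℕ} (u : SchwartzMap (EuclideanSpace ℝ (Fin n)) ℝ) :
    Integrable (fun x => u x * Real.log (u x)) (volume : Measure (EuclideanSpace ℝ (Fin n))) := by
  set V := EuclideanSpace ℝ (Fin n)
  set M : ℝ := max 1 (SchwartzMap.seminorm ℝ 0 0 u) with hMdef
  have hM1 : (1:ℝ) ≤ M := le_max_left _ _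
  have hMb : ∀ x, |u x| ≤ M := fun x =>
    le_trans (by simpa using u.norm_le_seminorm ℝ x) (le_max_right _ _)
  set C : ℝ := 2 + Real.sqrt M * Real.log M with hCdef
  have hC0 : 0 ≤ C := by
    have := Real.log_nonneg hM1
    have := Real.sqrt_nonneg M
    positivity
  set B : ℝ := 2 ^ (2*(n+1)) *
    (Finset.Iic (2*(n+1), 0)).sup (fun m => SchwartzMap.seminorm ℝ m.1 m.2) u with hBdef
  have hB : ∀ x : V, (1 + ‖x‖) ^ (2*(n+1)) * |u x| ≤ B := by
    intro x
    have := u.one_add_le_sup_seminorm_apply (𝕜 := ℝ) (m := (2*(n+1), 0)) le_rfl le_rfl x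
    simpa [norm_iteratedFDeriv_zero] using this
  have hB0 : 0 ≤ B := le_trans (by positivity) (hB 0)
  -- pointwise bound
  have hpt : ∀ x : V, ‖u x * Real.log (u x)‖ ≤
      (C * Real.sqrt B) * ((1 + ‖x‖) ^ (n+1))⁻¹ := by
    intro x
    have h1x : (0:ℝ) < 1 + ‖x‖ := by positivity
    have hux : |u x| ≤ B / (1 + ‖x‖) ^ (2*(n+1)) := by
      rw [le_div_iff₀ (by positivity)]
      calc |u x| * (1 + ‖x‖) ^ (2*(n+1)) = (1 + ‖x‖) ^ (2*(n+1)) * |u x| := by ring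
        _ ≤ B := hB x
    have hsq : Real.sqrt |u x| ≤ Real.sqrt B * ((1 + ‖x‖) ^ (n+1))⁻¹ := by
      calc Real.sqrt |u x| ≤ Real.sqrt (B / (1 + ‖x‖) ^ (2*(n+1))) := Real.sqrt_le_sqrt hux
        _ = Real.sqrt B / Real.sqrt ((1 + ‖x‖) ^ (2*(n+1))) := Real.sqrt_div hB0 _
        _ = Real.sqrt B * ((1 + ‖x‖) ^ (n+1))⁻¹ := by
            rw [show (2*(n+1)) = (n+1)*2 by ring, pow_mul, Real.sqrt_sq (by positivity),
              div_eq_mul_inv]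
    calc ‖u x * Real.log (u x)‖ = |u x * Real.log (u x)| := rfl
      _ ≤ C * Real.sqrt |u x| := mul_log_le_sqrt hM1 (hMb x)
      _ ≤ C * (Real.sqrt B * ((1 + ‖x‖) ^ (n+1))⁻¹) := by
          exact mul_le_mul_of_nonneg_left hsq hC0
      _ = (C * Real.sqrt B) * ((1 + ‖x‖) ^ (n+1))⁻¹ := by ring
  -- integrable majorant
  have hmaj : Integrable (fun x : V => (C * Real.sqrt B) * ((1 + ‖x‖) ^ (n+1))⁻¹) volume := by
    have h1 : Integrable (fun x : V => (1 + ‖x‖) ^ (-((n:ℝ)+1))) volume := by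
      apply integrable_one_add_norm
      rw [finrank_euclideanSpace_fin]
      linarith
    have h2 : ∀ x : V, (1 + ‖x‖ : ℝ) ^ (-((n:ℝ)+1)) = ((1 + ‖x‖) ^ (n+1))⁻¹ := by
      intro x
      rw [Real.rpow_neg (by positivity), ← Real.rpow_natCast (1 + ‖x‖) (n+1)]
      norm_num
    simp_rw [h2] at h1
    exact h1.const_mul _
  refine hmaj.mono' ?_ (Filter.Eventually.of_forall hpt)
  exact (u.continuous.measurable.mul
    (Real.measurable_log.comp u.continuous.measurable)).aestronglyMeasurable

variable {n : ℕ}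

theorem fourier_scale (f : EuclideanSpace ℝ (Fin n) → ℂ) (l : ℝ) (hl : 0 < l)
    (ξ : EuclideanSpace ℝ (Fin n)) :
    𝓕 (fun x => f (l⁻¹ • x)) ξ = ((l ^ n : ℝ) : ℂ) * 𝓕 f (l • ξ) := by
  have key := MeasureTheory.Measure.integral_comp_inv_smul_of_nonneg
    (volume : Measure (EuclideanSpace ℝ (Fin n)))
    (fun y => (𝐞 (-⟪y, l • ξ⟫) : ℂ) • f y) hl.le
  rw [Real.fourier_eq, Real.fourier_eq]
  calc ∫ x, (𝐞 (-⟪x, ξ⟫) : ℂ) • (fun x => f (l⁻¹ • x)) x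
      = ∫ x, (fun y => (𝐞 (-⟪y, l • ξ⟫) : ℂ) • f y) (l⁻¹ • x) := by
        refine integral_congr_ae (Filter.Eventually.of_forall fun x => ?_)
        simp only [real_inner_smul_right, real_inner_smul_left]
        rw [← mul_assoc, mul_inv_cancel₀ hl.ne', one_mul]
    _ = ((l ^ n : ℝ) : ℂ) * ∫ y, (𝐞 (-⟪y, l • ξ⟫) : ℂ) • f y := by
        rw [key, finrank_euclideanSpace_fin]
        simp [Complex.real_smul]

theorem fourier_const_mul (f : EuclideanSpace ℝ (Fin n) → ℂ) (a : ℂ)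
    (ξ : EuclideanSpace ℝ (Fin n)) :
    𝓕 (fun x => a * f x) ξ = a * 𝓕 f ξ := by
  rw [Real.fourier_eq, Real.fourier_eq, ← integral_const_mul]
  refine integral_congr_ae (Filter.Eventually.of_forall fun v => ?_)
  simp only [Circle.smul_def, smul_eq_mul]; ring

theorem fourier_sub {f h : EuclideanSpace ℝ (Fin n) → ℂ}
    (hf : Integrable f) (hh : Integrable h) (ξ : EuclideanSpace ℝ (Fin n)) :
    𝓕 (fun x => f x - h x) ξ = 𝓕 f ξ - 𝓕 h ξ := by
  rw [Real.fourier_eq, Real.fourier_eq, Real.fourier_eq, ← integral_sub]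
  · exact integral_congr_ae (Filter.Eventually.of_forall fun v => smul_sub _ _ _)
  · exact (Real.fourierIntegral_convergent_iff ξ).2 hf
  · exact (Real.fourierIntegral_convergent_iff ξ).2 hh

/-- if a Schwartz function `u` satisfies, on the Fourier side,
`(2 ln|ξ|)û(ξ) = 𝓕((4/n)u ln u - T u)(ξ)` for all `ξ`, then for every `l > 0` the
mass-preserving rescaling `u_l(x) = l^{-n/2}u(x/l)` satisfies the same equation:
the equation `𝓛_Δ u + T u = (4/n) u ln u` is scaling invariant. -/
theorem stmt_12 (n : ℕ) (hn : 1 ≤ n) (T : ℝ)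
    (u : SchwartzMap (EuclideanSpace ℝ (Fin n)) ℝ)
    (heq : ∀ ξ : EuclideanSpace ℝ (Fin n),
      ((2 * Real.log ‖ξ‖ : ℝ) : ℂ) *
          𝓕 (fun x => ((u x : ℝ) : ℂ)) ξ =
        𝓕
          (fun x => ((4 / (n : ℝ) * u x * Real.log (u x) - T * u x : ℝ) : ℂ)) ξ)
    (l : ℝ) (hl : 0 < l) :
    ∀ ξ : EuclideanSpace ℝ (Fin n),
      ((2 * Real.log ‖ξ‖ : ℝ) : ℂ) *
          𝓕
            (fun x => ((l ^ (-(n : ℝ) / 2) * u (l⁻¹ • x) : ℝ) : ℂ)) ξ =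
        𝓕
          (fun x => ((4 / (n : ℝ) * (l ^ (-(n : ℝ) / 2) * u (l⁻¹ • x)) *
              Real.log (l ^ (-(n : ℝ) / 2) * u (l⁻¹ • x)) -
            T * (l ^ (-(n : ℝ) / 2) * u (l⁻¹ • x)) : ℝ) : ℂ)) ξ := by
  intro ξ
  have hn0 : (n : ℝ) ≠ 0 := Nat.cast_ne_zero.2 (by omega)
  set c : ℝ := l ^ (-(n : ℝ) / 2) with hc
  have hc0 : 0 < c := Real.rpow_pos_of_pos hl _
  set uC : EuclideanSpace ℝ (Fin n) → ℂ := fun x => ((u x : ℝ) : ℂ) with huC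
  set gC : EuclideanSpace ℝ (Fin n) → ℂ :=
    fun x => ((4 / (n : ℝ) * u x * Real.log (u x) - T * u x : ℝ) : ℂ) with hgC
  -- integrability
  have huInt : Integrable uC := (u.integrable).ofReal
  have hgRInt : Integrable
      (fun x : EuclideanSpace ℝ (Fin n) =>
        4 / (n : ℝ) * u x * Real.log (u x) - T * u x) := by
    have h1 := integrable_mul_log u
    have h2 : (fun x : EuclideanSpace ℝ (Fin n) =>
          4 / (n : ℝ) * u x * Real.log (u x) - T * u x)
        = fun x => 4 / (n : ℝ) * (u x * Real.log (u x)) - T * u x := by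
      ext x; ring
    rw [h2]
    exact (h1.const_mul _).sub ((u.integrable).const_mul _)
  have hgInt : Integrable gC := hgRInt.ofReal
  -- F 0 = 0
  have hFcont : Continuous (𝓕 uC) :=
    VectorFourier.fourierIntegral_continuous Real.continuous_fourierChar
      (by exact continuous_inner) huInt
  haveI : Nontrivial (EuclideanSpace ℝ (Fin n)) := by
    refine ⟨⟨EuclideanSpace.single ⟨0, hn⟩ (1:ℝ), 0, fun h => ?_⟩⟩
    simpa using congrArg (fun f => f ⟨0, hn⟩) h
  haveI : (𝓝[≠] (0 : EuclideanSpace ℝ (Fin n))).NeBot :=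
    Module.punctured_nhds_neBot ℝ _ 0
  have hF0 : 𝓕 uC 0 = 0 := by
    have htends1 : Filter.Tendsto (𝓕 uC) (𝓝[≠] (0 : EuclideanSpace ℝ (Fin n)))
        (𝓝 (𝓕 uC 0)) := (hFcont.tendsto 0).mono_left nhdsWithin_le_nhds
    have htends2 : Filter.Tendsto (𝓕 uC) (𝓝[≠] (0 : EuclideanSpace ℝ (Fin n))) (𝓝 0) := by
      rw [tendsto_zero_iff_norm_tendsto_zero]
      set C : ℝ := ∫ x, ‖gC x‖ with hCdef
      have hGnorm : ∀ w : EuclideanSpace ℝ (Fin n), ‖𝓕 gC w‖ ≤ C := fun w =>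
        VectorFourier.norm_fourierIntegral_le_integral_norm _ _ _ _ _
      have hsmall : ∀ᶠ w in 𝓝[≠] (0 : EuclideanSpace ℝ (Fin n)), ‖w‖ < 1 := by
        apply Filter.Eventually.filter_mono nhdsWithin_le_nhds
        have := Metric.ball_mem_nhds (0 : EuclideanSpace ℝ (Fin n)) one_pos
        filter_upwards [this] with a ha
        simpa [dist_eq_norm] using ha
      have hne : ∀ᶠ w in 𝓝[≠] (0 : EuclideanSpace ℝ (Fin n)),
          w ∈ ({0}ᶜ : Set (EuclideanSpace ℝ (Fin n))) := eventually_mem_nhdsWithin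
      have hbound : ∀ᶠ w in 𝓝[≠] (0 : EuclideanSpace ℝ (Fin n)),
          ‖𝓕 uC w‖ ≤ C / (2 * -Real.log ‖w‖) := by
        filter_upwards [hsmall, hne] with w hw1 hw2
        have hw0 : (0:ℝ) < ‖w‖ := norm_pos_iff.2 hw2
        have hlogneg : Real.log ‖w‖ < 0 := Real.log_neg hw0 hw1
        have hEq := heq w
        have hnorms : (2 * -Real.log ‖w‖) * ‖𝓕 uC w‖ = ‖𝓕 gC w‖ := by
          rw [← hEq, norm_mul, Complex.norm_real]
          rw [Real.norm_eq_abs, abs_of_nonpos (by linarith)]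
          ring
        rw [le_div_iff₀ (by linarith)]
        calc ‖𝓕 uC w‖ * (2 * -Real.log ‖w‖) = ‖𝓕 gC w‖ := by rw [← hnorms]; ring
          _ ≤ C := hGnorm w
      have htend : Filter.Tendsto (fun w : EuclideanSpace ℝ (Fin n) =>
          C / (2 * -Real.log ‖w‖)) (𝓝[≠] (0 : EuclideanSpace ℝ (Fin n))) (𝓝 0) := by
        apply Filter.Tendsto.div_atTop tendsto_const_nhds
        have hnorm : Filter.Tendsto (fun w : EuclideanSpace ℝ (Fin n) => ‖w‖)
            (𝓝[≠] (0 : EuclideanSpace ℝ (Fin n))) (𝓝[>] (0:ℝ)) := by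
          rw [tendsto_nhdsWithin_iff]
          constructor
          · exact ((continuous_norm.tendsto' 0 0 norm_zero).mono_left nhdsWithin_le_nhds)
          · filter_upwards [hne] with w hw
            exact norm_pos_iff.2 hw
        have hlog : Filter.Tendsto (fun w : EuclideanSpace ℝ (Fin n) => Real.log ‖w‖)
            (𝓝[≠] (0 : EuclideanSpace ℝ (Fin n))) Filter.atBot :=
          Real.tendsto_log_nhdsGT_zero.comp hnorm
        have hneg : Filter.Tendsto (fun w : EuclideanSpace ℝ (Fin n) => -Real.log ‖w‖)
            (𝓝[≠] (0 : EuclideanSpace ℝ (Fin n))) Filter.atTop :=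
          Filter.tendsto_neg_atBot_atTop.comp hlog
        exact Filter.Tendsto.const_mul_atTop two_pos hneg
      have hnn : ∀ᶠ w in 𝓝[≠] (0 : EuclideanSpace ℝ (Fin n)), 0 ≤ ‖𝓕 uC w‖ :=
        Filter.Eventually.of_forall fun w => norm_nonneg _
      exact squeeze_zero' hnn hbound htend
    exact tendsto_nhds_unique htends1 htends2
  -- main computation
  have hlinv : (l : ℝ)⁻¹ ≠ 0 := inv_ne_zero hl.ne'
  have huIntD : Integrable (fun x : EuclideanSpace ℝ (Fin n) => uC (l⁻¹ • x)) :=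
    huInt.comp_smul hlinv
  have hgIntD : Integrable (fun x : EuclideanSpace ℝ (Fin n) => gC (l⁻¹ • x)) :=
    hgInt.comp_smul hlinv
  have hLHSfun : (fun x : EuclideanSpace ℝ (Fin n) => ((c * u (l⁻¹ • x) : ℝ) : ℂ))
      = fun x => (c : ℂ) * uC (l⁻¹ • x) := by
    ext x; rw [huC]; push_cast; ring
  have hRHSfun : (fun x : EuclideanSpace ℝ (Fin n) =>
        ((4 / (n : ℝ) * (c * u (l⁻¹ • x)) * Real.log (c * u (l⁻¹ • x))
          - T * (c * u (l⁻¹ • x)) : ℝ) : ℂ))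
      = fun x => (c : ℂ) * ((fun y => gC (l⁻¹ • y)) x
          - ((2 * Real.log l : ℝ) : ℂ) * (fun y => uC (l⁻¹ • y)) x) := by
    ext x
    have hreal : 4 / (n : ℝ) * (c * u (l⁻¹ • x)) * Real.log (c * u (l⁻¹ • x))
          - T * (c * u (l⁻¹ • x))
        = c * ((4 / (n : ℝ) * u (l⁻¹ • x) * Real.log (u (l⁻¹ • x)) - T * u (l⁻¹ • x))
            - (2 * Real.log l) * u (l⁻¹ • x)) := by
      rcases eq_or_ne (u (l⁻¹ • x)) 0 with h | h
      · rw [h]; simp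
      · have hlog : Real.log (c * u (l⁻¹ • x)) = Real.log c + Real.log (u (l⁻¹ • x)) :=
          Real.log_mul hc0.ne' h
        have hlogc : Real.log c = (-(n : ℝ) / 2) * Real.log l := Real.log_rpow hl _
        rw [hlog, hlogc]
        field_simp
        ring
    rw [hgC, huC]
    push_cast [hreal]
    ring
  rw [hLHSfun, hRHSfun]
  rw [show (fun x : EuclideanSpace ℝ (Fin n) => uC (l⁻¹ • x))
      = fun x => (fun y : EuclideanSpace ℝ (Fin n) => uC (l⁻¹ • y)) x from rfl] at huIntD
  rw [fourier_const_mul, fourier_const_mul,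
    fourier_sub hgIntD (huIntD.const_mul ((2 * Real.log l : ℝ) : ℂ)),
    fourier_const_mul, fourier_scale uC l hl ξ, fourier_scale gC l hl ξ]
  have hG := heq (l • ξ)
  rcases eq_or_ne ξ 0 with rfl | hξ
  · rw [smul_zero] at hG ⊢
    rw [hF0] at hG ⊢
    rw [← hG]
    ring
  · have hnorm : ‖l • ξ‖ = l * ‖ξ‖ := by
      rw [norm_smul, Real.norm_of_nonneg hl.le]
    have hlogm : Real.log ‖l • ξ‖ = Real.log l + Real.log ‖ξ‖ := by
      rw [hnorm, Real.log_mul hl.ne' (norm_ne_zero_iff.2 hξ)]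
    rw [hlogm] at hG
    rw [← hG]
    push_cast
    ring
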